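/- Output states and corrections in the iterated CHSH game strategy: define T₀ = Φ⁺_{0,1}, T₁ = Φ⁺_{1,7}, T₂ = Φ⁺_{2,7}, T₃ = Φ⁺_{3,1}. Then for every μ ∈ ℤ₄: (i) tr₂₃( (Φ⁺_{0,1} ⊗ Φ⁺_{0,1}) · (I₂ ⊗ Φ⁺_{μ,1} ⊗ I₂) ) = ¼ T_μ, and (ii) the local correction returns the reference state: (σ_μ ⊗ I) T_μ (σ_μ ⊗ I) = Φ⁺_{0,1}. -/

import Mathlib

open Matrix Kronecker Complex

noncomputable section

/-- The Pauli matrices indexed by ℤ₄. -/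
def pauli : ZMod 4 → Matrix (Fin 2) (Fin 2) ℂ := fun μ =>
  if μ = 0 then 1
  else if μ = 1 then !![0, 1; 1, 0]
  else if μ = 2 then !![0, -Complex.I; Complex.I, 0]
  else !![1, 0; 0, -1]

/-- The rotation R = diag(e^{-iπ/8}, e^{iπ/8}). -/
def R : Matrix (Fin 2) (Fin 2) ℂ :=
  !![Complex.exp (-(Real.pi / 8 : ℝ) * Complex.I), 0;
     0, Complex.exp ((Real.pi / 8 : ℝ) * Complex.I)]

/-- The Bell vector |Φ⁺⟩ = (|00⟩+|11⟩)/√2. -/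
def bell : Fin 2 × Fin 2 → ℂ := fun p =>
  if p.1 = p.2 then ((Real.sqrt 2 : ℝ) : ℂ)⁻¹ else 0

/-- The Bell projector P_Φ = |Φ⁺⟩⟨Φ⁺|. -/
def PΦ : Matrix (Fin 2 × Fin 2) (Fin 2 × Fin 2) ℂ :=
  Matrix.of fun p q => bell p * (starRingEnd ℂ) (bell q)

/-- Φ⁺_{μ,m} = ((σ_μ R^m)† ⊗ I) P_Φ ((σ_μ R^m) ⊗ I). -/
def PhiProj (μ : ZMod 4) (m : ZMod 8) : Matrix (Fin 2 × Fin 2) (Fin 2 × Fin 2) ℂ :=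
  ((pauli μ * R ^ m.val)ᴴ ⊗ₖ (1 : Matrix (Fin 2) (Fin 2) ℂ)) * PΦ *
    ((pauli μ * R ^ m.val) ⊗ₖ (1 : Matrix (Fin 2) (Fin 2) ℂ))

/-- r = 2^{1/4}. -/
def r : ℝ := (2 : ℝ) ^ ((1 : ℝ) / 4)

/-- The stretched stabilizer states Ω. -/
def Ω : Set (Matrix (Fin 2) (Fin 2) ℂ) :=
  { (1 / 2 : ℂ) • (1 + (r : ℂ) • pauli 1),
    (1 / 2 : ℂ) • (1 - (r : ℂ) • pauli 1),
    (1 / 2 : ℂ) • (1 + (r : ℂ) • pauli 2),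
    (1 / 2 : ℂ) • (1 - (r : ℂ) • pauli 2),
    (1 / 2 : ℂ) • (1 + pauli 3),
    (1 / 2 : ℂ) • (1 - pauli 3) }

/-- The set Φ of entangled states/effects. -/
def PhiSet : Set (Matrix (Fin 2 × Fin 2) (Fin 2 × Fin 2) ℂ) :=
  { Q | ∃ μ : ZMod 4, ∃ m : ZMod 8, m ∈ ({1, 3, 5, 7} : Set (ZMod 8)) ∧ Q = PhiProj μ m }

/-- Place a 4×4 matrix `Q` on tensor factors (2,3) of (ℂ²)⊗⁴ (identity on factors 1 and 4). -/
def mid (Q : Matrix (Fin 2 × Fin 2) (Fin 2 × Fin 2) ℂ) :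
    Matrix ((Fin 2 × Fin 2) × (Fin 2 × Fin 2)) ((Fin 2 × Fin 2) × (Fin 2 × Fin 2)) ℂ :=
  Matrix.of fun p q =>
    (1 : Matrix (Fin 2) (Fin 2) ℂ) p.1.1 q.1.1 *
      Q (p.1.2, p.2.1) (q.1.2, q.2.1) *
      (1 : Matrix (Fin 2) (Fin 2) ℂ) p.2.2 q.2.2

/-- Partial trace over the first tensor factor of ℂ² ⊗ ℂ². -/
def ptr1 (M : Matrix (Fin 2 × Fin 2) (Fin 2 × Fin 2) ℂ) : Matrix (Fin 2) (Fin 2) ℂ :=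
  Matrix.of fun i j => ∑ a : Fin 2, M (a, i) (a, j)

/-- Partial trace over the second tensor factor of ℂ² ⊗ ℂ². -/
def ptr2 (M : Matrix (Fin 2 × Fin 2) (Fin 2 × Fin 2) ℂ) : Matrix (Fin 2) (Fin 2) ℂ :=
  Matrix.of fun i j => ∑ a : Fin 2, M (i, a) (j, a)

/-- Partial trace over the second and third tensor factors of (ℂ²)⊗⁴. -/
def ptr23
    (M : Matrix ((Fin 2 × Fin 2) × (Fin 2 × Fin 2)) ((Fin 2 × Fin 2) × (Fin 2 × Fin 2)) ℂ) :
    Matrix (Fin 2 × Fin 2) (Fin 2 × Fin 2) ℂ :=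
  Matrix.of fun p q => ∑ b : Fin 2, ∑ c : Fin 2, M ((p.1, b), (c, p.2)) ((q.1, b), (c, q.2))

end


noncomputable section AuxProof

/-- zz = e^{iπ/8}. -/
def zz : ℂ := Complex.exp ((Real.pi / 8 : ℝ) * Complex.I)

lemma zz_ne : zz ≠ 0 := Complex.exp_ne_zero _

lemma zz8 : zz ^ 8 = -1 := by
  rw [zz, ← Complex.exp_nat_mul]
  have h : ((8 : ℕ) : ℂ) * (((Real.pi / 8 : ℝ) : ℂ) * Complex.I) = Real.pi * Complex.I := by
    push_cast; ring
  rw [h, Complex.exp_pi_mul_I]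

lemma exp_neg_eq : Complex.exp (-(Real.pi / 8 : ℝ) * Complex.I) = zz⁻¹ := by
  rw [zz, ← Complex.exp_neg]
  congr 1; push_cast; ring

lemma conj_zz : (starRingEnd ℂ) zz = zz⁻¹ := by
  rw [zz, ← Complex.exp_conj]
  have h : (starRingEnd ℂ) (((Real.pi / 8 : ℝ) : ℂ) * Complex.I) =
      -((((Real.pi / 8 : ℝ)) : ℂ) * Complex.I) := by
    rw [_root_.map_mul, Complex.conj_ofReal, Complex.conj_I]; ring
  rw [h, Complex.exp_neg]

lemma R_eq : R = !![zz⁻¹, 0; 0, zz] := by rw [R, exp_neg_eq, zz]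

lemma zz7 : zz ^ 7 = -zz⁻¹ := by
  rw [inv_eq_one_div, ← neg_div, eq_div_iff zz_ne]
  linear_combination zz8

lemma R7 : R ^ 7 = !![-zz, 0; 0, -zz⁻¹] := by
  have h : R ^ 7 = !![(zz⁻¹) ^ 7, 0; 0, zz ^ 7] := by
    rw [R_eq]
    ext i j
    fin_cases i <;> fin_cases j <;>
      simp [pow_succ, Matrix.mul_apply, Fin.sum_univ_two]
  rw [h, zz7, inv_pow, zz7]
  simp [inv_neg]

lemma PΦ_eq : PΦ = Matrix.of fun p q =>
    if p.1 = p.2 ∧ q.1 = q.2 then (1/2 : ℂ) else 0 := by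
  have hs : ((Real.sqrt 2 : ℝ) : ℂ)⁻¹ * ((Real.sqrt 2 : ℝ) : ℂ)⁻¹ = 1/2 := by
    rw [← mul_inv, ← Complex.ofReal_mul, Real.mul_self_sqrt (by norm_num)]
    norm_num
  ext p q
  simp only [PΦ, bell, Matrix.of_apply, apply_ite (starRingEnd ℂ), map_zero, map_inv₀,
    Complex.conj_ofReal]
  split_ifs with h1 h2 <;> simp_all [hs]

lemma phiProj_apply (μ : ZMod 4) (m : ZMod 8) (p q : Fin 2 × Fin 2) :
    PhiProj μ m p q =
      (1/2 : ℂ) * (starRingEnd ℂ) ((pauli μ * R ^ m.val) p.2 p.1) *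
        ((pauli μ * R ^ m.val) q.2 q.1) := by
  obtain ⟨p1, p2⟩ := p; obtain ⟨q1, q2⟩ := q
  fin_cases p2 <;> fin_cases q2 <;>
    · simp [PhiProj, Matrix.mul_apply, PΦ_eq, Matrix.kroneckerMap_apply,
        ← Matrix.conjTranspose_pow, Matrix.conjTranspose_apply, Matrix.one_apply,
        Fintype.sum_prod_type, Fin.sum_univ_two]
      exact Or.inl (by ring)



lemma pauli_zero : pauli 0 = 1 := rfl
lemma pauli_one : pauli 1 = !![0, 1; 1, 0] := rfl
lemma pauli_two : pauli 2 = !![0, -Complex.I; Complex.I, 0] := rfl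
lemma pauli_three : pauli 3 = !![1, 0; 0, -1] := rfl

set_option maxHeartbeats 1000000 in
lemma P01 : PhiProj 0 1 = Matrix.of fun p q =>
    (1/2 : ℂ) * ((!![zz, 0; 0, zz⁻¹] : Matrix (Fin 2) (Fin 2) ℂ) p.1 p.2) *
      ((!![zz⁻¹, 0; 0, zz] : Matrix (Fin 2) (Fin 2) ℂ) q.1 q.2) := by
  have hm : ((1 : ZMod 8)).val = 1 := rfl
  ext p q
  rw [phiProj_apply, Matrix.of_apply, hm, pow_one, R_eq]
  obtain ⟨p1, p2⟩ := p; obtain ⟨q1, q2⟩ := q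
  fin_cases p1 <;> fin_cases p2 <;> fin_cases q1 <;> fin_cases q2 <;>
    simp [pauli_zero, pauli_one, pauli_two, pauli_three,
      Matrix.mul_apply, Fin.sum_univ_two, conj_zz, map_inv₀, Complex.conj_I, inv_inv] <;>
    ring

set_option maxHeartbeats 1000000 in
lemma P11 : PhiProj 1 1 = Matrix.of fun p q =>
    (1/2 : ℂ) * ((!![0, zz; zz⁻¹, 0] : Matrix (Fin 2) (Fin 2) ℂ) p.1 p.2) *
      ((!![0, zz⁻¹; zz, 0] : Matrix (Fin 2) (Fin 2) ℂ) q.1 q.2) := by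
  have hm : ((1 : ZMod 8)).val = 1 := rfl
  ext p q
  rw [phiProj_apply, Matrix.of_apply, hm, pow_one, R_eq]
  obtain ⟨p1, p2⟩ := p; obtain ⟨q1, q2⟩ := q
  fin_cases p1 <;> fin_cases p2 <;> fin_cases q1 <;> fin_cases q2 <;>
    simp [pauli_zero, pauli_one, pauli_two, pauli_three,
      Matrix.mul_apply, Fin.sum_univ_two, conj_zz, map_inv₀, Complex.conj_I, inv_inv] <;>
    ring

set_option maxHeartbeats 1000000 in
lemma P21 : PhiProj 2 1 = Matrix.of fun p q =>
    (1/2 : ℂ) * ((!![0, -(Complex.I * zz); Complex.I * zz⁻¹, 0] : Matrix (Fin 2) (Fin 2) ℂ) p.1 p.2) *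
      ((!![0, Complex.I * zz⁻¹; -(Complex.I * zz), 0] : Matrix (Fin 2) (Fin 2) ℂ) q.1 q.2) := by
  have hm : ((1 : ZMod 8)).val = 1 := rfl
  ext p q
  rw [phiProj_apply, Matrix.of_apply, hm, pow_one, R_eq]
  obtain ⟨p1, p2⟩ := p; obtain ⟨q1, q2⟩ := q
  fin_cases p1 <;> fin_cases p2 <;> fin_cases q1 <;> fin_cases q2 <;>
    simp [pauli_zero, pauli_one, pauli_two, pauli_three,
      Matrix.mul_apply, Fin.sum_univ_two, conj_zz, map_inv₀, Complex.conj_I, inv_inv] <;>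
    ring

set_option maxHeartbeats 1000000 in
lemma P31 : PhiProj 3 1 = Matrix.of fun p q =>
    (1/2 : ℂ) * ((!![zz, 0; 0, -zz⁻¹] : Matrix (Fin 2) (Fin 2) ℂ) p.1 p.2) *
      ((!![zz⁻¹, 0; 0, -zz] : Matrix (Fin 2) (Fin 2) ℂ) q.1 q.2) := by
  have hm : ((1 : ZMod 8)).val = 1 := rfl
  ext p q
  rw [phiProj_apply, Matrix.of_apply, hm, pow_one, R_eq]
  obtain ⟨p1, p2⟩ := p; obtain ⟨q1, q2⟩ := q
  fin_cases p1 <;> fin_cases p2 <;> fin_cases q1 <;> fin_cases q2 <;>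
    simp [pauli_zero, pauli_one, pauli_two, pauli_three,
      Matrix.mul_apply, Fin.sum_univ_two, conj_zz, map_inv₀, Complex.conj_I, inv_inv] <;>
    ring

set_option maxHeartbeats 1000000 in
lemma P17 : PhiProj 1 7 = Matrix.of fun p q =>
    (1/2 : ℂ) * ((!![0, -zz⁻¹; -zz, 0] : Matrix (Fin 2) (Fin 2) ℂ) p.1 p.2) *
      ((!![0, -zz; -zz⁻¹, 0] : Matrix (Fin 2) (Fin 2) ℂ) q.1 q.2) := by
  have hm : ((7 : ZMod 8)).val = 7 := rfl
  ext p q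
  rw [phiProj_apply, Matrix.of_apply, hm, R7]
  obtain ⟨p1, p2⟩ := p; obtain ⟨q1, q2⟩ := q
  fin_cases p1 <;> fin_cases p2 <;> fin_cases q1 <;> fin_cases q2 <;>
    simp [pauli_zero, pauli_one, pauli_two, pauli_three,
      Matrix.mul_apply, Fin.sum_univ_two, conj_zz, map_inv₀, Complex.conj_I, inv_inv] <;>
    ring

set_option maxHeartbeats 1000000 in
lemma P27 : PhiProj 2 7 = Matrix.of fun p q =>
    (1/2 : ℂ) * ((!![0, Complex.I * zz⁻¹; -(Complex.I * zz), 0] : Matrix (Fin 2) (Fin 2) ℂ) p.1 p.2) *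
      ((!![0, -(Complex.I * zz); Complex.I * zz⁻¹, 0] : Matrix (Fin 2) (Fin 2) ℂ) q.1 q.2) := by
  have hm : ((7 : ZMod 8)).val = 7 := rfl
  ext p q
  rw [phiProj_apply, Matrix.of_apply, hm, R7]
  obtain ⟨p1, p2⟩ := p; obtain ⟨q1, q2⟩ := q
  fin_cases p1 <;> fin_cases p2 <;> fin_cases q1 <;> fin_cases q2 <;>
    simp [pauli_zero, pauli_one, pauli_two, pauli_three,
      Matrix.mul_apply, Fin.sum_univ_two, conj_zz, map_inv₀, Complex.conj_I, inv_inv] <;>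
    ring

end AuxProof

/-- The output states T₀ = Φ⁺_{0,1}, T₁ = Φ⁺_{1,7}, T₂ = Φ⁺_{2,7}, T₃ = Φ⁺_{3,1}. -/
noncomputable def T : ZMod 4 → Matrix (Fin 2 × Fin 2) (Fin 2 × Fin 2) ℂ := fun μ =>
  if μ = 0 then PhiProj 0 1
  else if μ = 1 then PhiProj 1 7
  else if μ = 2 then PhiProj 2 7
  else PhiProj 3 1


lemma T_zero : T 0 = PhiProj 0 1 := rfl
lemma T_one : T 1 = PhiProj 1 7 := rfl
lemma T_two : T 2 = PhiProj 2 7 := rfl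
lemma T_three : T 3 = PhiProj 3 1 := rfl

set_option maxHeartbeats 4000000 in
/-- Output states and corrections in the iterated CHSH game strategy:
(i) tr₂₃((Φ⁺_{0,1} ⊗ Φ⁺_{0,1})(I₂ ⊗ Φ⁺_{μ,1} ⊗ I₂)) = ¼ T_μ, and
(ii) (σ_μ ⊗ I) T_μ (σ_μ ⊗ I) = Φ⁺_{0,1}. -/
theorem stmt_16 (μ : ZMod 4) :
    ptr23 ((PhiProj 0 1 ⊗ₖ PhiProj 0 1) * mid (PhiProj μ 1)) = (1 / 4 : ℂ) • T μ ∧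
    (pauli μ ⊗ₖ (1 : Matrix (Fin 2) (Fin 2) ℂ)) * T μ *
        (pauli μ ⊗ₖ (1 : Matrix (Fin 2) (Fin 2) ℂ)) = PhiProj 0 1 := by
  
  have hc : μ = 0 ∨ μ = 1 ∨ μ = 2 ∨ μ = 3 := by revert μ; decide
  constructor
  · rcases hc with rfl | rfl | rfl | rfl <;>
      ext p q <;>
      obtain ⟨p1, p2⟩ := p <;> obtain ⟨q1, q2⟩ := q <;>
      fin_cases p1 <;> fin_cases p2 <;> fin_cases q1 <;> fin_cases q2 <;>
      simp only [ptr23, mid, T_zero, T_one, T_two, T_three, P01, P11, P21, P31, P17, P27,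
        Matrix.mul_apply, Matrix.smul_apply, Matrix.kroneckerMap_apply, Matrix.of_apply,
        Matrix.one_apply, Fintype.sum_prod_type, Fin.sum_univ_two, smul_eq_mul] <;>
      norm_num <;>
      (try field_simp) <;>
      ring_nf <;>
      (first
        | rfl
        | (field_simp [zz_ne]; try ring)
        | exact Or.inl (by field_simp [zz_ne]; try ring)) <;>
      simp [Complex.I_pow_four]
  · rcases hc with rfl | rfl | rfl | rfl <;>
      ext p q <;>
      obtain ⟨p1, p2⟩ := p <;> obtain ⟨q1, q2⟩ := q <;>
      fin_cases p1 <;> fin_cases p2 <;> fin_cases q1 <;> fin_cases q2 <;>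
      simp only [T_zero, T_one, T_two, T_three, pauli_zero, pauli_one, pauli_two, pauli_three,
        P01, P11, P21, P31, P17, P27, Matrix.mul_apply, Matrix.kroneckerMap_apply,
        Matrix.of_apply, Matrix.one_apply, Fintype.sum_prod_type, Fin.sum_univ_two] <;>
      norm_num <;>
      (try field_simp) <;>
      ring_nf <;>
      (first
        | rfl
        | (field_simp [zz_ne]; try ring)
        | exact Or.inl (by field_simp [zz_ne]; try ring)) <;>
      simp [Complex.I_pow_four]
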